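/- arXiv:2012.00473 — 3 statements merged into one kernel-verified Lean document; each statement's English description precedes it below -/
import Mathlib

section
/- Let C be a finite type with a free additive action of ℤ/3ℤ, let Q be the quotient of C by the orbit equivalence relation, with quotient map π : C → Q, and for c, c' in the same orbit let sh(c,c') be the unique k ∈ ℤ/3ℤ with k +ᵥ c = c'. Let f : C ≃ C be an equivariant permutation (f(k +ᵥ c) = k +ᵥ f(c) for all k, c), and let f̄ : Q ≃ Q be the induced permutation of the quotient. Then for any two sections φ, φ' : Q → C of π (i.e. π ∘ φ = id and π ∘ φ' = id), one has ∑_{v ∈ Q} sh(f(φ(v)), φ(f̄(v))) = ∑_{v ∈ Q} sh(f(φ'(v)), φ'(f̄(v))) in ℤ/3ℤ. (In particular the common value, denoted sh(f), is well defined.) -/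
open scoped Classical

/-- The shift `sh c c'`: the (under a free action, unique) element `k : ZMod 3`
with `k +ᵥ c = c'`, when `c` and `c'` lie in the same orbit; junk value `0`
otherwise. -/
noncomputable def sh {C : Type*} [AddAction (ZMod 3) C] (c c' : C) : ZMod 3 :=
  if h : ∃ k : ZMod 3, k +ᵥ c = c' then h.choose else 0

lemma sh_vadd {C : Type*} [AddAction (ZMod 3) C] {c c' : C}
    (h : ∃ k : ZMod 3, k +ᵥ c = c') : sh c c' +ᵥ c = c' := by
  rw [sh, dif_pos h]; exact h.choose_spec

lemma sh_eq {C : Type*} [AddAction (ZMod 3) C]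
    (hfree : ∀ (k : ZMod 3) (c : C), k +ᵥ c = c → k = 0)
    {k : ZMod 3} {c c' : C} (h : k +ᵥ c = c') : sh c c' = k := by
  have h2 := sh_vadd ⟨k, h⟩
  have h5 : (sh c c' - k) +ᵥ (k +ᵥ c) = k +ᵥ c := by
    rw [← add_vadd, sub_add_cancel, h2, h]
  exact sub_eq_zero.mp (hfree _ _ h5)

/-- Theorem 4.3(ii): for an equivariant permutation `f` of `C` inducing `f̄` on the
orbit space `Q`, the sum `∑ v : Q, sh (f (φ v)) (φ (f̄ v))` does not depend on the
choice of the section `φ` of the quotient map. -/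
theorem sum_sh_section_independent {C : Type*} [Finite C] [AddAction (ZMod 3) C]
    (hfree : ∀ (k : ZMod 3) (c : C), k +ᵥ c = c → k = 0)
    (f : Equiv.Perm C)
    (hf : ∀ (k : ZMod 3) (c : C), f (k +ᵥ c) = k +ᵥ f c)
    (fbar : Equiv.Perm (Quotient (AddAction.orbitRel (ZMod 3) C)))
    (hfbar : ∀ c : C,
      Quotient.mk (AddAction.orbitRel (ZMod 3) C) (f c)
        = fbar (Quotient.mk (AddAction.orbitRel (ZMod 3) C) c))
    (φ φ' : Quotient (AddAction.orbitRel (ZMod 3) C) → C)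
    (hφ : ∀ q, Quotient.mk (AddAction.orbitRel (ZMod 3) C) (φ q) = q)
    (hφ' : ∀ q, Quotient.mk (AddAction.orbitRel (ZMod 3) C) (φ' q) = q) :
    ∑ᶠ q, sh (f (φ q)) (φ (fbar q)) = ∑ᶠ q, sh (f (φ' q)) (φ' (fbar q)) := by
  have : Finite (Quotient (AddAction.orbitRel (ZMod 3) C)) := Quotient.finite _
  have : Fintype (Quotient (AddAction.orbitRel (ZMod 3) C)) := Fintype.ofFinite _
  have same : ∀ x y : C,
      Quotient.mk (AddAction.orbitRel (ZMod 3) C) x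
        = Quotient.mk (AddAction.orbitRel (ZMod 3) C) y →
      ∃ k : ZMod 3, k +ᵥ x = y := by
    intro x y h
    exact AddAction.mem_orbit_iff.mp (Quotient.exact h.symm)
  have horb : ∀ q, ∃ k : ZMod 3, k +ᵥ φ q = φ' q := fun q =>
    same _ _ (by rw [hφ, hφ'])
  have haspec : ∀ q, sh (φ q) (φ' q) +ᵥ φ q = φ' q := fun q => sh_vadd (horb q)
  have horbf : ∀ q, ∃ k : ZMod 3, k +ᵥ f (φ q) = φ (fbar q) := fun q =>
    same _ _ (by rw [hφ, hfbar, hφ])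
  have hbspec : ∀ q, sh (f (φ q)) (φ (fbar q)) +ᵥ f (φ q) = φ (fbar q) :=
    fun q => sh_vadd (horbf q)
  have key : ∀ q, sh (f (φ' q)) (φ' (fbar q))
      = sh (f (φ q)) (φ (fbar q)) + sh (φ (fbar q)) (φ' (fbar q)) - sh (φ q) (φ' q) := by
    intro q
    apply sh_eq hfree
    calc (sh (f (φ q)) (φ (fbar q)) + sh (φ (fbar q)) (φ' (fbar q)) - sh (φ q) (φ' q))
          +ᵥ f (φ' q)
        = (sh (f (φ q)) (φ (fbar q)) + sh (φ (fbar q)) (φ' (fbar q)) - sh (φ q) (φ' q))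
          +ᵥ f (sh (φ q) (φ' q) +ᵥ φ q) := by rw [haspec q]
      _ = ((sh (f (φ q)) (φ (fbar q)) + sh (φ (fbar q)) (φ' (fbar q)) - sh (φ q) (φ' q))
          + sh (φ q) (φ' q)) +ᵥ f (φ q) := by rw [hf, ← add_vadd]
      _ = sh (φ (fbar q)) (φ' (fbar q)) +ᵥ (sh (f (φ q)) (φ (fbar q)) +ᵥ f (φ q)) := by
          rw [← add_vadd]; congr 1; ring
      _ = φ' (fbar q) := by rw [hbspec q, haspec (fbar q)]
  rw [finsum_eq_sum_of_fintype, finsum_eq_sum_of_fintype]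
  calc ∑ q, sh (f (φ q)) (φ (fbar q))
      = ∑ q, (sh (f (φ q)) (φ (fbar q)) + sh (φ (fbar q)) (φ' (fbar q)) - sh (φ q) (φ' q)) := by
        rw [Finset.sum_sub_distrib, Finset.sum_add_distrib,
          Equiv.sum_comp fbar (fun q => sh (φ q) (φ' q))]
        ring
    _ = ∑ q, sh (f (φ' q)) (φ' (fbar q)) :=
        Finset.sum_congr rfl fun q _ => (key q).symm
end

section
/- Let C be a finite type with a free additive action of ℤ/3ℤ, let Q be the quotient of C by the orbit equivalence relation with quotient map π, and for c, c' in the same orbit let sh(c,c') be the unique k ∈ ℤ/3ℤ with k +ᵥ c = c'. For an equivariant permutation f : C ≃ C with induced permutation f̄ of Q, define sh(f) = ∑_{v ∈ Q} sh(f(φ(v)), φ(f̄(v))) for a (any) section φ : Q → C of π. Then for any two equivariant permutations f and g of C, sh(f ∘ g) = sh(f) + sh(g) in ℤ/3ℤ. -/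
open scoped Classical

lemma sh_exists {C : Type*} [AddAction (ZMod 3) C] {c c' : C}
    (h : Quotient.mk (AddAction.orbitRel (ZMod 3) C) c
        = Quotient.mk (AddAction.orbitRel (ZMod 3) C) c') :
    ∃ k : ZMod 3, k +ᵥ c = c' := by
  have h2 : c ∈ AddAction.orbit (ZMod 3) c' := Quotient.exact h
  obtain ⟨k, hk⟩ := AddAction.mem_orbit_iff.mp h2
  exact ⟨-k, by rw [← hk, vadd_vadd, neg_add_cancel, zero_vadd]⟩

lemma sh_trans {C : Type*} [AddAction (ZMod 3) C]
    (hfree : ∀ (k : ZMod 3) (c : C), k +ᵥ c = c → k = 0)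
    {c c' c'' : C}
    (h1 : Quotient.mk (AddAction.orbitRel (ZMod 3) C) c
        = Quotient.mk (AddAction.orbitRel (ZMod 3) C) c')
    (h2 : Quotient.mk (AddAction.orbitRel (ZMod 3) C) c'
        = Quotient.mk (AddAction.orbitRel (ZMod 3) C) c'') :
    sh c c'' = sh c c' + sh c' c'' := by
  obtain ⟨k1, hk1⟩ := sh_exists h1
  obtain ⟨k2, hk2⟩ := sh_exists h2
  rw [sh_eq hfree hk1, sh_eq hfree hk2,
    sh_eq hfree (k := k2 + k1) (by rw [← vadd_vadd, hk1, hk2])]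
  ring

/-- Theorem 4.3(iii): the total shift is additive under composition of equivariant
permutations: `sh (f ∘ g) = sh f + sh g` in `ZMod 3`. -/
theorem sum_sh_comp {C : Type*} [Finite C] [AddAction (ZMod 3) C]
    (hfree : ∀ (k : ZMod 3) (c : C), k +ᵥ c = c → k = 0)
    (f g : Equiv.Perm C)
    (hf : ∀ (k : ZMod 3) (c : C), f (k +ᵥ c) = k +ᵥ f c)
    (hg : ∀ (k : ZMod 3) (c : C), g (k +ᵥ c) = k +ᵥ g c)
    (fbar gbar : Equiv.Perm (Quotient (AddAction.orbitRel (ZMod 3) C)))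
    (hfbar : ∀ c : C,
      Quotient.mk (AddAction.orbitRel (ZMod 3) C) (f c)
        = fbar (Quotient.mk (AddAction.orbitRel (ZMod 3) C) c))
    (hgbar : ∀ c : C,
      Quotient.mk (AddAction.orbitRel (ZMod 3) C) (g c)
        = gbar (Quotient.mk (AddAction.orbitRel (ZMod 3) C) c))
    (φ : Quotient (AddAction.orbitRel (ZMod 3) C) → C)
    (hφ : ∀ q, Quotient.mk (AddAction.orbitRel (ZMod 3) C) (φ q) = q) :
    ∑ᶠ q, sh ((f * g) (φ q)) (φ ((fbar * gbar) q))
      = (∑ᶠ q, sh (f (φ q)) (φ (fbar q))) + ∑ᶠ q, sh (g (φ q)) (φ (gbar q)) := by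
  have : Finite (Quotient (AddAction.orbitRel (ZMod 3) C)) := Quotient.finite _
  set mk := Quotient.mk (AddAction.orbitRel (ZMod 3) C)
  -- pointwise decomposition
  have key : ∀ q, sh ((f * g) (φ q)) (φ ((fbar * gbar) q))
      = sh (g (φ q)) (φ (gbar q)) + sh (f (φ (gbar q))) (φ (fbar (gbar q))) := by
    intro q
    have h1 : mk (g (φ q)) = mk (φ (gbar q)) := by
      rw [hgbar, hφ, hφ]
    have h2 : mk (f (φ (gbar q))) = mk (φ (fbar (gbar q))) := by
      rw [hfbar, hφ, hφ]
    have h1' : mk (f (g (φ q))) = mk (f (φ (gbar q))) := by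
      rw [hfbar, hfbar, h1]
    have htr := sh_trans hfree h1' h2
    obtain ⟨k, hk⟩ := sh_exists h1
    have hk' : k +ᵥ f (g (φ q)) = f (φ (gbar q)) := by rw [← hf, hk]
    have e1 : sh (f (g (φ q))) (f (φ (gbar q))) = sh (g (φ q)) (φ (gbar q)) := by
      rw [sh_eq hfree hk, sh_eq hfree hk']
    simp only [Equiv.Perm.mul_apply]
    rw [htr, e1]
  rw [finsum_congr key, finsum_add_distrib (Set.toFinite _) (Set.toFinite _)]
  rw [add_comm]
  congr 1
  exact finsum_comp_equiv gbar (f := fun q => sh (f (φ q)) (φ (fbar q)))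
end

section
/- Let C be a finite type with a free additive action of ℤ/3ℤ, let Q be the quotient of C by the orbit equivalence relation with quotient map π, and for c, c' in the same orbit let sh(c,c') be the unique k ∈ ℤ/3ℤ with k +ᵥ c = c'. Let f : C ≃ C be an equivariant permutation with induced permutation f̄ of Q, and define sh(f) = ∑_{v ∈ Q} sh(f(φ(v)), φ(f̄(v))) for a (any) section φ : Q → C of π. If there exists a section φ₀ of π such that f(φ₀(v)) = φ₀(f̄(v)) for every v ∈ Q, then sh(f) = 0. -/
open scoped Classical

lemma sh_eq_of_vadd {C : Type*} [AddAction (ZMod 3) C]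
    (hfree : ∀ (k : ZMod 3) (c : C), k +ᵥ c = c → k = 0)
    (c : C) (k : ZMod 3) : sh c (k +ᵥ c) = k := by
  have h : ∃ j : ZMod 3, j +ᵥ c = k +ᵥ c := ⟨k, rfl⟩
  rw [sh, dif_pos h]
  have hc := h.choose_spec
  have : (h.choose - k) +ᵥ c = c := by
    rw [sub_eq_add_neg, add_comm, add_vadd, hc, ← add_vadd, neg_add_cancel, zero_vadd]
  have := hfree _ _ this
  exact sub_eq_zero.mp this

/-- Key step of Theorem 4.3(v): if an equivariant permutation `f` admits a section
`φ₀` of the quotient map compatible with `f` (i.e. `f (φ₀ v) = φ₀ (f̄ v)` for all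
`v`), then its total shift vanishes: `sh f = 0` (computed with any section `φ`). -/
theorem sum_sh_eq_zero_of_compatible_section
    {C : Type*} [Finite C] [AddAction (ZMod 3) C]
    (hfree : ∀ (k : ZMod 3) (c : C), k +ᵥ c = c → k = 0)
    (f : Equiv.Perm C)
    (hf : ∀ (k : ZMod 3) (c : C), f (k +ᵥ c) = k +ᵥ f c)
    (fbar : Equiv.Perm (Quotient (AddAction.orbitRel (ZMod 3) C)))
    (hfbar : ∀ c : C,
      Quotient.mk (AddAction.orbitRel (ZMod 3) C) (f c)
        = fbar (Quotient.mk (AddAction.orbitRel (ZMod 3) C) c))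
    (φ₀ : Quotient (AddAction.orbitRel (ZMod 3) C) → C)
    (hφ₀ : ∀ q, Quotient.mk (AddAction.orbitRel (ZMod 3) C) (φ₀ q) = q)
    (hcomm : ∀ q, f (φ₀ q) = φ₀ (fbar q))
    (φ : Quotient (AddAction.orbitRel (ZMod 3) C) → C)
    (hφ : ∀ q, Quotient.mk (AddAction.orbitRel (ZMod 3) C) (φ q) = q) :
    ∑ᶠ q, sh (f (φ q)) (φ (fbar q)) = 0 := by
  haveI : Fintype C := Fintype.ofFinite C
  -- choose k q with φ q = k q +ᵥ φ₀ q
  have hk : ∀ q, ∃ k : ZMod 3, φ q = k +ᵥ φ₀ q := by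
    intro q
    have : Quotient.mk (AddAction.orbitRel (ZMod 3) C) (φ q)
        = Quotient.mk (AddAction.orbitRel (ZMod 3) C) (φ₀ q) := by rw [hφ, hφ₀]
    have h := Quotient.exact this
    obtain ⟨k, hk⟩ := h
    exact ⟨k, hk.symm⟩
  choose k hkspec using hk
  have key : ∀ q, sh (f (φ q)) (φ (fbar q)) = k (fbar q) - k q := by
    intro q
    have h1 : f (φ q) = k q +ᵥ φ₀ (fbar q) := by
      rw [hkspec q, hf, hcomm]
    have h2 : φ (fbar q) = (k (fbar q) - k q) +ᵥ f (φ q) := by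
      rw [h1, ← add_vadd, sub_add_cancel, hkspec (fbar q)]
    rw [h2, sh_eq_of_vadd hfree]
  rw [finsum_eq_sum_of_fintype]
  simp only [key]
  rw [Finset.sum_sub_distrib]
  rw [Equiv.sum_comp fbar k]
  exact sub_self _
end
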